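/- Let V be a finite-dimensional representation of a torus T with all weight spaces one-dimensional, and suppose the set of weights Φ(V) lies in an open half-space. If an element P of the group ring ℤ[X(T)] has simple factor 1 − e^{−α} for α ∈ Φ(V) (i.e. P = (1 − e^{−α})·Q where Q lies in the subring generated by e^{−λ}, λ ∈ Φ(V) \ {α}), and α is integrally indecomposable in Φ(V) (not expressible as a sum of at least two elements of Φ(V)), then in the formal power series expansion of P / ∏_{β∈Φ(V)}(1 − e^{−β}) as a sum of terms e^{−γ} with γ in the nonnegative integer cone of Φ(V), the coefficient of e^{−α} is zero. -/

import Mathlib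

/-- The number of ways to write `γ` as a nonnegative integer linear combination of
elements of the finite set `Φ`; this is the coefficient of `e^{-γ}` in the formal
expansion of `∏_{β ∈ Φ} (1 - e^{-β})⁻¹ = ∏_{β ∈ Φ} (1 + e^{-β} + e^{-2β} + ⋯)`. -/
noncomputable def nreps {M : Type*} [AddCommGroup M] (Φ : Finset M) (γ : M) : ℕ :=
  Set.ncard {c : M → ℕ | (∀ β ∉ Φ, c β = 0) ∧ ∑ β ∈ Φ, c β • β = γ}

/-- The coefficient of `e^{-γ}` in the formal power series expansion of
`P / ∏_{β ∈ Φ} (1 - e^{-β})`, where `P ∈ ℤ[X(T)]`. -/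
noncomputable def expansionCoeff {M : Type*} [AddCommGroup M] (Φ : Finset M)
    (P : AddMonoidAlgebra ℤ M) (γ : M) : ℤ :=
  ∑ μ ∈ P.coeff.support, P.coeff μ * (nreps Φ (γ + μ) : ℤ)

section Aux

variable {M : Type*} [AddCommGroup M]

lemma expansionCoeff_eq_sum (Φ : Finset M) (P : AddMonoidAlgebra ℤ M) (γ : M) :
    expansionCoeff Φ P γ = P.coeff.sum (fun μ a => a * (nreps Φ (γ + μ) : ℤ)) := rfl

lemma expansionCoeff_sub (Φ : Finset M) (P₁ P₂ : AddMonoidAlgebra ℤ M) (γ : M) :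
    expansionCoeff Φ (P₁ - P₂) γ = expansionCoeff Φ P₁ γ - expansionCoeff Φ P₂ γ := by
  simp only [expansionCoeff_eq_sum, AddMonoidAlgebra.coeff_sub]
  exact Finsupp.sum_sub_index (fun a b₁ b₂ => sub_mul _ _ _)

lemma single_mul_eq_mapDomain (τ : M) (Q : AddMonoidAlgebra ℤ M) :
    ((AddMonoidAlgebra.single τ (1 : ℤ)) * Q).coeff
      = Finsupp.mapDomain (⇑(Equiv.addLeft τ)) Q.coeff := by
  ext ν
  rw [AddMonoidAlgebra.coeff_single_mul_apply, one_mul, Finsupp.mapDomain_equiv_apply]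
  simp

lemma expansionCoeff_single_mul (Φ : Finset M) (Q : AddMonoidAlgebra ℤ M) (τ γ : M) :
    expansionCoeff Φ ((AddMonoidAlgebra.single τ (1 : ℤ)) * Q) γ
      = expansionCoeff Φ Q (γ + τ) := by
  rw [expansionCoeff_eq_sum, single_mul_eq_mapDomain,
    Finsupp.sum_mapDomain_index_inj (Equiv.addLeft τ).injective, expansionCoeff_eq_sum]
  refine Finsupp.sum_congr fun μ _ => ?_
  simp [add_assoc]

/-- Every element of the support of an element of the subring generated by the
`e^{-λ}`, `λ ∈ Φ \ {α}`, is minus a nonnegative combination of `Φ` not using `α`. -/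
lemma support_mem_cone {Φ : Finset M} {α : M} {Q : AddMonoidAlgebra ℤ M}
    (hQ : Q ∈ Subring.closure
      ((fun lam => (AddMonoidAlgebra.single (-lam) (1 : ℤ) : AddMonoidAlgebra ℤ M)) ''
        ((Φ : Set M) \ {α}))) :
    ∀ μ ∈ Q.coeff.support, ∃ d : M → ℕ,
      (∀ β ∉ Φ, d β = 0) ∧ d α = 0 ∧ ∑ β ∈ Φ, d β • β = -μ := by
  classical
  set N : AddSubmonoid M :=
    { carrier := {μ | ∃ d : M → ℕ,
        (∀ β ∉ Φ, d β = 0) ∧ d α = 0 ∧ ∑ β ∈ Φ, d β • β = -μ}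
      zero_mem' := ⟨0, fun _ _ => rfl, rfl, by simp⟩
      add_mem' := by
        rintro x y ⟨d, hd0, hdα, hd⟩ ⟨e, he0, heα, he⟩
        refine ⟨d + e, fun β hβ => by simp [hd0 β hβ, he0 β hβ],
          by simp [hdα, heα], ?_⟩
        simp only [Pi.add_apply, add_smul, Finset.sum_add_distrib, hd, he]
        abel } with hN
  suffices hs : ∀ μ ∈ Q.coeff.support, μ ∈ N by
    intro μ hμ; exact hs μ hμ
  induction hQ using Subring.closure_induction with
  | mem x hx =>
    obtain ⟨lam, hlam, rfl⟩ := hx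
    obtain ⟨hlamΦ, hlamα⟩ := hlam
    intro μ hμ
    have : μ = -lam := by
      have := Finsupp.support_single_subset hμ
      simpa using this
    subst this
    refine ⟨fun β => if β = lam then 1 else 0, ?_, ?_, ?_⟩
    · intro β hβ
      simp only [ite_eq_right_iff]
      rintro rfl; exact absurd hlamΦ hβ
    · simp only [ite_eq_right_iff]
      rintro rfl; exact (hlamα rfl).elim
    · rw [neg_neg]
      rw [Finset.sum_eq_single_of_mem lam hlamΦ]
      · simp
      · intro b _ hb; simp [hb]
  | zero => intro μ hμ; simp at hμ
  | one =>
    intro μ hμ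
    have : μ = 0 := by
      rw [AddMonoidAlgebra.one_def] at hμ
      simpa using Finsupp.support_single_subset hμ
    subst this; exact N.zero_mem
  | add x y hx hy ihx ihy =>
    intro μ hμ
    rcases Finset.mem_union.mp (Finsupp.support_add hμ) with h' | h'
    · exact ihx μ h'
    · exact ihy μ h'
  | neg x hx ihx =>
    intro μ hμ
    rw [AddMonoidAlgebra.coeff_neg, Finsupp.support_neg] at hμ
    exact ihx μ hμ
  | mul x y hx hy ihx ihy =>
    intro μ hμ
    have := AddMonoidAlgebra.support_coeff_mul_subset x y hμ
    rw [Finset.mem_add] at this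
    obtain ⟨a, ha, b, hb, rfl⟩ := this
    exact N.add_mem (ihx a ha) (ihy b hb)

/-- Key combinatorial step: if `μ` is minus a nonnegative combination of `Φ \ {α}` and
`α` is integrally indecomposable, then `nreps Φ (α + μ) = nreps Φ μ`. -/
lemma nreps_add_eq {Φ : Finset M} (h : M →+ ℝ) (hpos : ∀ β ∈ Φ, 0 < h β)
    {α : M} (hαΦ : α ∈ Φ)
    (hind : ¬ ∃ c : M → ℕ, (∀ β ∉ Φ, c β = 0) ∧ 2 ≤ ∑ β ∈ Φ, c β ∧
      ∑ β ∈ Φ, c β • β = α)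
    {μ : M} (hμ : ∃ d : M → ℕ,
      (∀ β ∉ Φ, d β = 0) ∧ d α = 0 ∧ ∑ β ∈ Φ, d β • β = -μ) :
    nreps Φ (α + μ) = nreps Φ μ := by
  classical
  obtain ⟨d, hd0, hdα, hd⟩ := hμ
  set δ : M → ℕ := fun β => if β = α then 1 else 0 with hδ
  have hδsum : ∑ β ∈ Φ, δ β • β = α := by
    rw [Finset.sum_eq_single_of_mem α hαΦ]
    · simp [hδ]
    · intro b _ hb; simp [hδ, hb]
  -- every representation of `α + μ` uses `α` at least once
  have hpos' : ∀ c : M → ℕ, (∀ β ∉ Φ, c β = 0) → ∑ β ∈ Φ, c β • β = α + μ →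
      1 ≤ c α := by
    intro c hc0 hcs
    by_contra hca
    have hcα : c α = 0 := by omega
    set e : M → ℕ := fun β => c β + d β with he
    have hesum : ∑ β ∈ Φ, e β • β = α := by
      simp only [he, add_smul, Finset.sum_add_distrib, hcs, hd]
      abel
    have he0 : ∀ β ∉ Φ, e β = 0 := fun β hβ => by simp [he, hc0 β hβ, hd0 β hβ]
    have heα : e α = 0 := by simp [he, hcα, hdα]
    have hle : ∑ β ∈ Φ, e β ≤ 1 := by
      by_contra hle
      exact hind ⟨e, he0, by omega, hesum⟩
    obtain ⟨β₀, hβ₀Φ, hβ₀⟩ : ∃ β₀ ∈ Φ, e β₀ ≠ 0 := by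
      by_contra hall
      push_neg at hall
      have : α = 0 := by
        rw [← hesum, Finset.sum_eq_zero]
        intro b hb; rw [hall b hb, zero_smul]
      have h0 := hpos α hαΦ
      rw [this, map_zero] at h0; exact lt_irrefl _ h0
    have hsplit : e β₀ + ∑ β ∈ Φ.erase β₀, e β = ∑ β ∈ Φ, e β :=
      Finset.add_sum_erase _ _ hβ₀Φ
    have heβ₀ : e β₀ = 1 := by omega
    have herase : ∑ β ∈ Φ.erase β₀, e β = 0 := by omega
    have hzero : ∀ b ∈ Φ.erase β₀, e b = 0 := by
      intro b hb
      exact (Finset.sum_eq_zero_iff.mp herase) b hb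
    have hαβ₀ : α = β₀ := by
      rw [← hesum, Finset.sum_eq_single_of_mem β₀ hβ₀Φ]
      · rw [heβ₀, one_smul]
      · intro b hb hbne
        rw [hzero b (Finset.mem_erase.mpr ⟨hbne, hb⟩), zero_smul]
    rw [← hαβ₀] at hβ₀
    exact hβ₀ heα
  -- the image description
  have himg : {c : M → ℕ | (∀ β ∉ Φ, c β = 0) ∧ ∑ β ∈ Φ, c β • β = α + μ}
      = (fun c => c + δ) '' {c : M → ℕ | (∀ β ∉ Φ, c β = 0) ∧ ∑ β ∈ Φ, c β • β = μ} := by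
    ext c
    constructor
    · rintro ⟨hc0, hcs⟩
      have hca := hpos' c hc0 hcs
      refine ⟨fun β => c β - δ β, ⟨?_, ?_⟩, ?_⟩
      · intro β hβ; simp [hc0 β hβ]
      · have hceq : (fun β => (c β - δ β) + δ β) = c := by
          funext β
          by_cases hb : β = α
          · subst hb; simp [hδ]; omega
          · simp [hδ, hb]
        have key : (∑ β ∈ Φ, (c β - δ β) • β) + α = α + μ := by
          conv_rhs => rw [← hcs]
          rw [← hδsum, ← Finset.sum_add_distrib]
          exact Finset.sum_congr rfl fun β _ => by
            rw [← add_smul, congrFun hceq β]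
        rw [add_comm α μ] at key
        exact add_right_cancel key
      · funext β
        by_cases hb : β = α
        · subst hb; simp [hδ]; omega
        · simp [hδ, hb]
    · rintro ⟨c', ⟨hc0, hcs⟩, rfl⟩
      refine ⟨fun β hβ => ?_, ?_⟩
      · have : β ≠ α := fun hb => hβ (hb ▸ hαΦ)
        simp [hc0 β hβ, hδ, this]
      · show ∑ β ∈ Φ, (c' β + δ β) • β = α + μ
        rw [show (∑ β ∈ Φ, (c' β + δ β) • β)
            = (∑ β ∈ Φ, c' β • β) + ∑ β ∈ Φ, δ β • β by
          rw [← Finset.sum_add_distrib]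
          exact Finset.sum_congr rfl fun β _ => (add_smul _ _ _), hcs, hδsum]
        exact add_comm μ α
  have hinj : Function.Injective (fun c : M → ℕ => c + δ) := by
    intro c₁ c₂ hc
    funext β
    have := congrFun hc β
    simpa using this
  rw [nreps, nreps, himg, Set.ncard_image_of_injective _ hinj]

end Aux

/-- Let `Φ = Φ(V)` be the (one-dimensional) weights of a torus
representation, lying in an open half-space (witnessed by the additive functional `h`).
If `α ∈ Φ` is integrally indecomposable in `Φ` and `P = (1 - e^{-α})·Q` with `Q` in
the subring generated by the `e^{-λ}`, `λ ∈ Φ \ {α}` (i.e. `1 - e^{-α}` is a simple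
factor of `P`), then the coefficient of `e^{-α}` in the formal expansion of
`P / ∏_{β ∈ Φ}(1 - e^{-β})` is zero. -/
theorem stmt2 {M : Type*} [AddCommGroup M] (Φ : Finset M)
    (h : M →+ ℝ) (hpos : ∀ β ∈ Φ, 0 < h β)
    (α : M) (hαΦ : α ∈ Φ)
    (hind : ¬ ∃ c : M → ℕ, (∀ β ∉ Φ, c β = 0) ∧ 2 ≤ ∑ β ∈ Φ, c β ∧
      ∑ β ∈ Φ, c β • β = α)
    (P Q : AddMonoidAlgebra ℤ M)
    (hQ : Q ∈ Subring.closure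
      ((fun lam => (AddMonoidAlgebra.single (-lam) (1 : ℤ) : AddMonoidAlgebra ℤ M)) ''
        ((Φ : Set M) \ {α})))
    (hP : P = (1 - AddMonoidAlgebra.single (-α) (1 : ℤ)) * Q) :
    expansionCoeff Φ P α = 0 := by
  rw [hP, sub_mul, one_mul, expansionCoeff_sub, expansionCoeff_single_mul]
  rw [show α + -α = (0 : M) by abel]
  unfold expansionCoeff
  rw [← Finset.sum_sub_distrib]
  apply Finset.sum_eq_zero
  intro μ hμ
  rw [zero_add, nreps_add_eq h hpos hαΦ hind (support_mem_cone hQ μ hμ), sub_self]
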